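/- The inscribed Riemannian Jacobian is the largest Jacobian: for every Jacobian J (monotone, degree-2 homogeneous, SL₂-invariant, with J(s₀) = 1) and every norm s on ℝ², J(s) ≤ J^i(s), where J^i(s) = π / |L| and |L| is the Lebesgue area of the Loewner ellipse (largest-area inscribed ellipse) of the unit ball of s. -/

import Mathlib

open Matrix MeasureTheory Real

noncomputable section

/-- The Euclidean plane. -/
abbrev E2 := EuclideanSpace ℝ (Fin 2)

/-- `SL(2,ℝ)` as matrices of determinant one. -/
abbrev SL2 := Matrix.SpecialLinearGroup (Fin 2) ℝ

/-- The seminorm `v ↦ s (M v)`, i.e. `s ∘ M`. -/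
def compM (s : Seminorm ℝ E2) (M : Matrix (Fin 2) (Fin 2) ℝ) : Seminorm ℝ E2 :=
  s.comp (Matrix.toEuclideanLin M)

/-- A seminorm is a norm iff it is positive away from the origin. -/
def IsNorm (s : Seminorm ℝ E2) : Prop := ∀ v : E2, v ≠ 0 → 0 < s v

/-- Monotonicity of a functional on seminorms. -/
def Monot (J : Seminorm ℝ E2 → ℝ) : Prop := ∀ s s' : Seminorm ℝ E2, s' ≤ s → J s' ≤ J s

/-- Degree 2 homogeneity of a functional on seminorms. -/
def Homog (J : Seminorm ℝ E2 → ℝ) : Prop :=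
  ∀ (c : NNReal) (s : Seminorm ℝ E2), J (c • s) = (c : ℝ) ^ 2 * J s

/-- `SL₂`-invariance of a functional on seminorms. -/
def SL2inv (J : Seminorm ℝ E2 → ℝ) : Prop :=
  ∀ (s : Seminorm ℝ E2) (T : SL2), J (compM s (T : Matrix (Fin 2) (Fin 2) ℝ)) = J s

/-- The Reshetnyak energy `I²₊(s) = max_{v ∈ S¹} s(v)²`. -/
def Iplus (s : Seminorm ℝ E2) : ℝ := ⨆ v : Metric.sphere (0 : E2) 1, (s (v : E2)) ^ 2

/-- The unit ball of a seminorm. -/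
def unitBallS (s : Seminorm ℝ E2) : Set E2 := {v | s v ≤ 1}

/-- The ellipse `M(D̄)` is inscribed in the unit ball of `s`. -/
def ellipseIn (s : Seminorm ℝ E2) (M : Matrix (Fin 2) (Fin 2) ℝ) : Prop :=
  (Matrix.toEuclideanLin M) '' (Metric.closedBall 0 1) ⊆ unitBallS s

/-- The area of the largest ellipse inscribed in the unit ball of `s`
(the area of the Loewner ellipse); the ellipse `M(D̄)` has area `π |det M|`. -/
def LoewnerArea (s : Seminorm ℝ E2) : ℝ :=
  sSup {a : ℝ | ∃ M : Matrix (Fin 2) (Fin 2) ℝ, ellipseIn s M ∧ a = π * |M.det|}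

/-- The inscribed Riemannian (Ivanov) Jacobian `J^i(s) = π / |L|`. -/
def Ji (s : Seminorm ℝ E2) : ℝ := π / LoewnerArea s

/-- `s` is isotropic: some round disc `t·D̄` is inscribed in the unit ball of `s` and has at
least the area of every inscribed ellipse, i.e. the Loewner ellipse is a round disc. -/
def Isotropic (s : Seminorm ℝ E2) : Prop :=
  ∃ t : ℝ, 0 < t ∧ Metric.closedBall (0 : E2) t ⊆ unitBallS s ∧
    ∀ M : Matrix (Fin 2) (Fin 2) ℝ, ellipseIn s M → π * |M.det| ≤ π * t ^ 2

/-- A Jacobian (definition of area): monotone, degree-2 homogeneous, `SL₂`-invariant,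
normalized on the Euclidean norm. -/
def IsJacobian (J : Seminorm ℝ E2 → ℝ) : Prop :=
  (∀ s, 0 ≤ J s) ∧ Monot J ∧ Homog J ∧ SL2inv J ∧ J (normSeminorm ℝ E2) = 1

section Aux

lemma coord_le_norm (v : E2) (i : Fin 2) : |v i| ≤ ‖v‖ := by
  have h2 : ‖v‖ ^ 2 = ∑ j, ‖v j‖ ^ 2 := by
    rw [EuclideanSpace.norm_eq, Real.sq_sqrt]; positivity
  have h3 : ‖v i‖ ^ 2 ≤ ‖v‖ ^ 2 := by
    rw [h2]
    exact Finset.single_le_sum (f := fun j => ‖v j‖ ^ 2) (fun j _ => by positivity)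
      (Finset.mem_univ i)
  rw [Real.norm_eq_abs] at h3
  nlinarith [norm_nonneg v, abs_nonneg (v i)]

lemma decomp (v : E2) :
    v = v 0 • EuclideanSpace.single 0 (1:ℝ) + v 1 • EuclideanSpace.single 1 (1:ℝ) := by
  ext i; fin_cases i <;> simp [EuclideanSpace.single_apply]

/-- Any seminorm on `E2` is bounded above by a positive multiple of the Euclidean norm. -/
lemma seminorm_upper (s : Seminorm ℝ E2) : ∃ C : ℝ, 0 < C ∧ ∀ v : E2, s v ≤ C * ‖v‖ := by
  set e0 : E2 := EuclideanSpace.single 0 (1:ℝ)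
  set e1 : E2 := EuclideanSpace.single 1 (1:ℝ)
  have n0 : 0 ≤ s e0 := apply_nonneg s e0
  have n1 : 0 ≤ s e1 := apply_nonneg s e1
  refine ⟨s e0 + s e1 + 1, by positivity, fun v => ?_⟩
  have h0 := coord_le_norm v 0
  have h1 := coord_le_norm v 1
  calc s v = s (v 0 • e0 + v 1 • e1) := by rw [← decomp v]
    _ ≤ s (v 0 • e0) + s (v 1 • e1) := map_add_le_add s _ _
    _ = |v 0| * s e0 + |v 1| * s e1 := by
        rw [map_smul_eq_mul, map_smul_eq_mul, Real.norm_eq_abs, Real.norm_eq_abs]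
    _ ≤ (s e0 + s e1 + 1) * ‖v‖ := by nlinarith [norm_nonneg v, abs_nonneg (v 0), abs_nonneg (v 1)]

/-- An inscribed ellipse gives a seminorm comparison. -/
lemma comp_le_of_ellipseIn (s : Seminorm ℝ E2) (M : Matrix (Fin 2) (Fin 2) ℝ)
    (hM : ellipseIn s M) : compM s M ≤ normSeminorm ℝ E2 := by
  intro v
  show (compM s M) v ≤ ‖v‖
  rcases eq_or_ne v 0 with rfl | hv
  · simp [compM]
  · have hnv : (0:ℝ) < ‖v‖ := norm_pos_iff.mpr hv
    have hu : ‖v‖⁻¹ • v ∈ Metric.closedBall (0 : E2) 1 := by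
      simp [norm_smul, abs_of_pos (inv_pos.mpr hnv), inv_mul_cancel₀ hnv.ne']
    have hle : s (Matrix.toEuclideanLin M (‖v‖⁻¹ • v)) ≤ 1 := hM ⟨_, hu, rfl⟩
    have heq : Matrix.toEuclideanLin M v = ‖v‖ • Matrix.toEuclideanLin M (‖v‖⁻¹ • v) := by
      rw [← _root_.map_smul, smul_smul, mul_inv_cancel₀ hnv.ne', one_smul]
    have hkey : (compM s M) v = ‖v‖ * s (Matrix.toEuclideanLin M (‖v‖⁻¹ • v)) := by
      show s (Matrix.toEuclideanLin M v) = _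
      rw [heq, map_smul_eq_mul, Real.norm_eq_abs, abs_of_pos hnv]
    rw [hkey]
    nlinarith

/-- The reflection matrix. -/
def Rm : Matrix (Fin 2) (Fin 2) ℝ := !![1, 0; 0, -1]

lemma Rm_det : Rm.det = -1 := by simp [Rm, Matrix.det_fin_two_of]

lemma Rm_norm (v : E2) : ‖Matrix.toEuclideanLin Rm v‖ = ‖v‖ := by
  have h0 : (Matrix.toEuclideanLin Rm v) 0 = v 0 := by
    simp [Matrix.toEuclideanLin_apply, Rm, Matrix.mulVec, dotProduct,
      Fin.sum_univ_two, Matrix.vecHead, Matrix.vecTail]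
  have h1 : (Matrix.toEuclideanLin Rm v) 1 = -v 1 := by
    simp [Matrix.toEuclideanLin_apply, Rm, Matrix.mulVec, dotProduct,
      Fin.sum_univ_two, Matrix.vecHead, Matrix.vecTail]
  rw [EuclideanSpace.norm_eq, EuclideanSpace.norm_eq]
  congr 1
  rw [Fin.sum_univ_two, Fin.sum_univ_two, h0, h1]
  simp

lemma ellipseIn_mul_Rm (s : Seminorm ℝ E2) (M : Matrix (Fin 2) (Fin 2) ℝ)
    (hM : ellipseIn s M) : ellipseIn s (M * Rm) := by
  rintro x ⟨v, hv, rfl⟩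
  have hcomp : Matrix.toEuclideanLin (M * Rm) v
      = Matrix.toEuclideanLin M (Matrix.toEuclideanLin Rm v) := by
    simp [Matrix.toEuclideanLin_apply, Matrix.mulVec_mulVec]
  rw [hcomp]
  apply hM
  refine ⟨_, ?_, rfl⟩
  simp only [Metric.mem_closedBall, dist_zero_right] at hv ⊢
  rw [Rm_norm]; exact hv

/-- Key inequality: every inscribed ellipse bounds `J s`. -/
lemma inscribed_bound (J : Seminorm ℝ E2 → ℝ) (hJ : IsJacobian J)
    (s : Seminorm ℝ E2) (M : Matrix (Fin 2) (Fin 2) ℝ) (hM : ellipseIn s M) :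
    |M.det| * J s ≤ 1 := by
  obtain ⟨hpos, hmon, hhom, hinv, hnorm⟩ := hJ
  rcases eq_or_ne M.det 0 with hd | hd
  · simp [hd]
  · set M' : Matrix (Fin 2) (Fin 2) ℝ := if 0 ≤ M.det then M else M * Rm with hM'def
    have hM' : ellipseIn s M' := by
      rw [hM'def]; split_ifs
      · exact hM
      · exact ellipseIn_mul_Rm s M hM
    have hdet' : M'.det = |M.det| := by
      rw [hM'def]; split_ifs with h
      · exact (abs_of_nonneg h).symm
      · rw [Matrix.det_mul, Rm_det, abs_of_neg (lt_of_not_ge h)]; ring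
    have hdpos : (0:ℝ) < |M.det| := abs_pos.mpr hd
    set c : ℝ := Real.sqrt |M.det| with hcdef
    have hcpos : 0 < c := Real.sqrt_pos.mpr hdpos
    have hcsq : c ^ 2 = |M.det| := Real.sq_sqrt hdpos.le
    set T : Matrix (Fin 2) (Fin 2) ℝ := c⁻¹ • M' with hTdef
    have hTdet : T.det = 1 := by
      rw [hTdef, Matrix.det_smul, hdet', Fintype.card_fin, ← hcsq, inv_pow]
      exact inv_mul_cancel₀ (pow_ne_zero 2 hcpos.ne')
    set Tsl : SL2 := ⟨T, hTdet⟩ with hTsldef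
    have hinvT : J (compM s T) = J s := by
      have h := hinv s Tsl
      have hTcoe : ((Tsl : SL2) : Matrix (Fin 2) (Fin 2) ℝ) = T := rfl
      rwa [hTcoe] at h
    set cn : NNReal := ⟨c, hcpos.le⟩ with hcndef
    have hEq : compM s M' = cn • compM s T := by
      ext v
      have hT : Matrix.toEuclideanLin T v = c⁻¹ • Matrix.toEuclideanLin M' v := by
        rw [hTdef, _root_.map_smul, LinearMap.smul_apply]
      have hrhs : (cn • compM s T) v = c * (compM s T) v := rfl
      rw [hrhs]
      show s (Matrix.toEuclideanLin M' v) = c * s (Matrix.toEuclideanLin T v)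
      rw [hT, map_smul_eq_mul, Real.norm_eq_abs, abs_of_pos (inv_pos.mpr hcpos)]
      field_simp
    have hJM' : J (compM s M') = |M.det| * J s := by
      rw [hEq, hhom, hinvT, hcndef]
      show c ^ 2 * J s = |M.det| * J s
      rw [hcsq]
    have hle : J (compM s M') ≤ J (normSeminorm ℝ E2) :=
      hmon _ _ (comp_le_of_ellipseIn s M' hM')
    rw [hJM', hnorm] at hle
    exact hle

end Aux

theorem stmt6' (J : Seminorm ℝ E2 → ℝ) (hJ : IsJacobian J)
    (s : Seminorm ℝ E2) (hs : IsNorm s) :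
    J s ≤ π / LoewnerArea s := by
  obtain ⟨hpos, hmon, hhom, hinv, hnorm⟩ := hJ
  set Sset : Set ℝ :=
    {a : ℝ | ∃ M : Matrix (Fin 2) (Fin 2) ℝ, ellipseIn s M ∧ a = π * |M.det|} with hSset
  have hLA : LoewnerArea s = sSup Sset := rfl
  have hSnn : ∀ a ∈ Sset, 0 ≤ a := by
    rintro a ⟨M, _, rfl⟩; positivity
  rcases (hpos s).eq_or_lt with hJs | hJs
  · rw [← hJs, hLA]
    exact div_nonneg Real.pi_pos.le (Real.sSup_nonneg hSnn)
  · have hub : ∀ a ∈ Sset, a ≤ π / J s := by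
      rintro a ⟨M, hM, rfl⟩
      have hkey := inscribed_bound J ⟨hpos, hmon, hhom, hinv, hnorm⟩ s M hM
      rw [le_div_iff₀ hJs]
      calc π * |M.det| * J s = π * (|M.det| * J s) := by ring
        _ ≤ π * 1 := by
            have := Real.pi_pos.le
            nlinarith [abs_nonneg M.det, hpos s]
        _ = π := mul_one π
    have hbdd : BddAbove Sset := ⟨π / J s, hub⟩
    obtain ⟨C, hC, hCb⟩ := seminorm_upper s
    have hmem : π * (C⁻¹) ^ 2 ∈ Sset := by
      refine ⟨C⁻¹ • (1 : Matrix (Fin 2) (Fin 2) ℝ), ?_, ?_⟩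
      · rintro x ⟨v, hv, rfl⟩
        simp only [Metric.mem_closedBall, dist_zero_right] at hv
        have h1 : Matrix.toEuclideanLin (C⁻¹ • (1 : Matrix (Fin 2) (Fin 2) ℝ)) v
            = C⁻¹ • v := by
          rw [_root_.map_smul, LinearMap.smul_apply]
          congr 1
          rw [Matrix.toEuclideanLin_apply, Matrix.one_mulVec]
        rw [h1]
        show s (C⁻¹ • v) ≤ 1
        rw [map_smul_eq_mul, Real.norm_eq_abs, abs_of_pos (inv_pos.mpr hC)]
        calc C⁻¹ * s v ≤ C⁻¹ * (C * ‖v‖) := by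
              have := hCb v
              have := (inv_pos.mpr hC).le
              nlinarith
          _ = ‖v‖ := by field_simp
          _ ≤ 1 := hv
      · rw [Matrix.det_smul, Matrix.det_one, Fintype.card_fin, mul_one,
          abs_of_pos (by positivity : (0:ℝ) < (C⁻¹)^2)]
    have hApos : 0 < LoewnerArea s := by
      rw [hLA]
      have h := le_csSup hbdd hmem
      have hp : 0 < π * (C⁻¹) ^ 2 := by positivity
      linarith
    have hA_le : LoewnerArea s ≤ π / J s := by
      rw [hLA]
      exact Real.sSup_le hub (by positivity)
    rw [le_div_iff₀ hApos]
    have h2 := (le_div_iff₀ hJs).mp hA_le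
    linarith


/-- The inscribed Riemannian Jacobian `J^i(s) = π / |L|` is the largest Jacobian. -/
theorem stmt6 (J : Seminorm ℝ E2 → ℝ) (hJ : IsJacobian J)
    (s : Seminorm ℝ E2) (hs : IsNorm s) :
    J s ≤ π / LoewnerArea s :=
  stmt6' J hJ s hs
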